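/- Let k ≥ 1, let Q be a primitive string, and let S be a string with |S| ≥ (2k+1)|Q|. If for some rotation index j ∈ [0,|Q|) one has δ_H(S, rot^j(Q)*) ≤ k, then among the 2k+1 consecutive length-|Q| fragments S_i := S[i|Q|..(i+1)|Q|) for i = 0,…,2k, at least k+1 of them are equal to rot^j(Q); consequently the rotation rot^j(Q) is the strict majority of the multiset {S_0,…,S_{2k}}, and the index j with this property is unique. -/

import Mathlib

open List

variable {α : Type*}

/-- The fragment S[i..j) of a string (list) S. -/
def frag (S : List α) (i j : ℕ) : List α := (S.drop i).take (j - i)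

/-- Q^∞[a..b): the fragment of the infinite repetition of Q from a (incl.) to b (excl.). -/
def repPrefix [Inhabited α] (Q : List α) (a b : ℕ) : List α :=
  (List.range' a (b - a)).map (fun i => Q.getD (i % Q.length) default)

/-- Hamming distance of two strings of the same length (counted over positions of S). -/
def hamming [DecidableEq α] [Inhabited α] (S T : List α) : ℕ :=
  ((Finset.range S.length).filter
    (fun i => S.getD i default ≠ T.getD i default)).card

/-- δ_H(S, Q*): Hamming distance of S to the length-|S| prefix of Q^∞. -/
def hammingStar [DecidableEq α] [Inhabited α] (S Q : List α) : ℕ :=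
  hamming S (repPrefix Q 0 S.length)

/-- Levenshtein cost structure (formerly in Mathlib, `Mathlib.Data.List.EditDistance.Defs`). -/
structure Levenshtein.Cost (α β δ : Type*) where
  delete : α → δ
  insert : β → δ
  substitute : α → β → δ

/-- The default unit-cost Levenshtein cost (formerly in Mathlib). -/
def Levenshtein.defaultCost {α : Type*} [DecidableEq α] : Levenshtein.Cost α α ℕ where
  delete _ := 1
  insert _ := 1
  substitute a b := if a = b then 0 else 1

/-- Helper for `suffixLevenshtein` (formerly in Mathlib). -/
def Levenshtein.impl {α β δ : Type*} [Add δ] [Min δ] (C : Levenshtein.Cost α β δ)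
    (xs : List α) (y : β) (d : {r : List δ // 0 < r.length}) : {r : List δ // 0 < r.length} :=
  let ⟨ds, w⟩ := d
  xs.zip (ds.zip ds.tail) |>.foldr
    (init := ⟨[C.insert y + ds.getLast (List.length_pos_iff.mp w)], by simp⟩)
    (fun ⟨x, d₀, d₁⟩ ⟨r, w⟩ =>
      ⟨min (C.delete x + r[0]) (min (C.insert y + d₀) (C.substitute x y + d₁)) :: r, by simp⟩)

/-- Levenshtein distances of all suffixes of `xs` to `ys` (formerly in Mathlib). -/
def suffixLevenshtein {α β δ : Type*} [Add δ] [Min δ] [Zero δ] (C : Levenshtein.Cost α β δ)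
    (xs : List α) (ys : List β) : {r : List δ // 0 < r.length} :=
  ys.foldr
    (Levenshtein.impl C xs)
    (xs.foldr (init := ⟨[0], by simp⟩) (fun a ⟨r, w⟩ => ⟨(C.delete a + r[0]) :: r, by simp⟩))

/-- Levenshtein distance (formerly in Mathlib). -/
def levenshtein {α β δ : Type*} [Add δ] [Min δ] [Zero δ] (C : Levenshtein.Cost α β δ)
    (xs : List α) (ys : List β) : δ :=
  let ⟨r, w⟩ := suffixLevenshtein C xs ys
  r[0]

/-- Edit (Levenshtein) distance. -/
def editDist [DecidableEq α] (S T : List α) : ℕ :=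
  levenshtein Levenshtein.defaultCost S T

/-- A string is primitive if it is nonempty and not a proper power of a string. -/
def Primitive (Q : List α) : Prop :=
  Q ≠ [] ∧ ∀ (U : List α) (t : ℕ), 2 ≤ t → Q ≠ (List.replicate t U).flatten

/-- p is a period of S. -/
def IsPeriod [Inhabited α] (p : ℕ) (S : List α) : Prop :=
  0 < p ∧ ∀ i, i + p < S.length → S.getD i default = S.getD (i + p) default

/-- per(S): the smallest period of S. -/
noncomputable def per [Inhabited α] (S : List α) : ℕ := sInf {p | IsPeriod p S}

/-- Occ^H_k(P,T): starting positions of k-mismatch occurrences of P in T. -/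
def occH [DecidableEq α] [Inhabited α] (k : ℕ) (P T : List α) : Finset ℕ :=
  (Finset.range (T.length - P.length + 1)).filter
    (fun i => hamming P (frag T i (i + P.length)) ≤ k)

/-- Exact occurrences of B in T. -/
def occExact [DecidableEq α] (B T : List α) : Finset ℕ :=
  (Finset.range (T.length + 1)).filter (fun i => frag T i (i + B.length) = B)

/-- Occ^E_k(P,T): starting positions of k-error (edit distance) occurrences of P in T. -/
def occE [DecidableEq α] (k : ℕ) (P T : List α) : Set ℕ :=
  {i | ∃ j, i ≤ j ∧ j ≤ T.length ∧ editDist P (frag T i j) ≤ k}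

/-- δ_E^cyc(S,Q): minimum edit distance of S to any substring of Q^∞. -/
noncomputable def edCyc [DecidableEq α] [Inhabited α] (S Q : List α) : ℕ :=
  sInf {d | ∃ i j, i ≤ j ∧ d = editDist S (repPrefix Q i j)}

/-- δ_E(S,Q*): minimum edit distance of S to a prefix of Q^∞. -/
noncomputable def edStar [DecidableEq α] [Inhabited α] (S Q : List α) : ℕ :=
  sInf {d | ∃ j, d = editDist S (repPrefix Q 0 j)}

/-- Minimum edit distance of T to a substring of Q^∞ starting at position x. -/
noncomputable def edStarAt [DecidableEq α] [Inhabited α] (T Q : List α) (x : ℕ) : ℕ :=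
  sInf {d | ∃ j, x ≤ j ∧ d = editDist T (repPrefix Q x j)}

/-- Minimum edit distance of T to a substring of Q^∞ ending at a position ≡ y (mod |Q|). -/
noncomputable def edEndAt [DecidableEq α] [Inhabited α] (T Q : List α) (y : ℕ) : ℕ :=
  sInf {d | ∃ i j, i ≤ j ∧ j % Q.length = y % Q.length ∧ d = editDist T (repPrefix Q i j)}

/-- Minimum edit distance of L to a substring of Q^∞ ending at a multiple of |Q|. -/
noncomputable def edEndMul [DecidableEq α] [Inhabited α] (L Q : List α) : ℕ :=
  sInf {d | ∃ i j, i ≤ j * Q.length ∧ d = editDist L (repPrefix Q i (j * Q.length))}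

/-- The fragment S[i..j) of S is locked with respect to Q. -/
def Locked [DecidableEq α] [Inhabited α] (S Q : List α) (i j : ℕ) : Prop :=
  (∃ a : ℕ, edCyc (frag S i j) Q = editDist (frag S i j) (repPrefix Q 0 (a * Q.length))) ∨
  (j = S.length ∧ edCyc (frag S i j) Q = edStar (frag S i j) Q) ∨
  (i = 0 ∧ edCyc (frag S i j) Q = edEndMul (frag S i j) Q) ∨
  (i = 0 ∧ j = S.length)

/-- rot^j(Q): rotation moving the last j (mod |Q|) characters to the front. -/
def rotR (Q : List α) (j : ℕ) : List α := Q.rotate (Q.length - j % Q.length)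

/-- |Mis(T,Q*) ∩ [a,b)|. -/
def misCount [DecidableEq α] [Inhabited α] (T Q : List α) (a b : ℕ) : ℕ :=
  ((Finset.Ico a b).filter (fun i => i < T.length ∧
     T.getD i default ≠ Q.getD (i % Q.length) default)).card

/-- μ_j: the total weight of aligned mismatch pairs of P and T against Q^∞ at shift j·|Q|:
a pair (τ = j|Q|+π, π) with π ∈ Mis(P,Q*), τ ∈ Mis(T,Q*) has weight 2 − δ_H(P[π],T[τ]). -/
def mu [DecidableEq α] [Inhabited α] (P T Q : List α) (j : ℕ) : ℕ :=
  ∑ π ∈ Finset.range P.length,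
    if P.getD π default ≠ Q.getD (π % Q.length) default ∧
       j * Q.length + π < T.length ∧
       T.getD (j * Q.length + π) default ≠ Q.getD ((j * Q.length + π) % Q.length) default
    then (if P.getD π default = T.getD (j * Q.length + π) default then 2 else 1)
    else 0

section Aux

lemma rotate_one_iterate (l : List α) (kk : ℕ) :
    (fun l : List α => l.rotate 1)^[kk] l = l.rotate kk := by
  induction kk with
  | zero => simp
  | succ m ih => rw [Function.iterate_succ_apply', ih, List.rotate_rotate]

lemma pow_of_rotate [Inhabited α] (Q : List α) (d : ℕ) (hd : 0 < d)
    (hdvd : d ∣ Q.length) (hn0 : 0 < Q.length) (hrot : Q.rotate d = Q) :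
    Q = (List.replicate (Q.length / d) (Q.take d)).flatten := by
  set n := Q.length with hn
  have hdn : d ≤ n := Nat.le_of_dvd hn0 hdvd
  have hstep : ∀ i, i < n → Q.getD i default = Q.getD ((i + d) % n) default := by
    intro i hi
    conv_lhs => rw [← hrot]
    rw [List.getD_eq_getElem _ _ (by simpa using hi),
        List.getD_eq_getElem _ _ (Nat.mod_lt _ hn0)]
    rw [List.getElem_rotate]
  have hper : ∀ i, i < n → Q.getD i default = Q.getD (i % d) default := by
    intro i
    induction i using Nat.strong_induction_on with
    | _ i ih =>
      intro hi
      rcases Nat.lt_or_ge i d with hcase | hcase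
      · rw [Nat.mod_eq_of_lt hcase]
      · have h1 : i - d < n := by omega
        have h2 := hstep (i - d) h1
        rw [Nat.sub_add_cancel hcase, Nat.mod_eq_of_lt hi] at h2
        have h3 : (i - d) % d = i % d := by
          conv_rhs => rw [← Nat.sub_add_cancel hcase, Nat.add_mod_right]
        rw [← h2, ih (i - d) (by omega) h1, h3]
  set t := n / d with htdef
  have htd : t * d = n := Nat.div_mul_cancel hdvd
  have htake : Q.take d = List.ofFn (fun i : Fin d => Q.getD i default) := by
    apply List.ext_getElem
    · simp [hdn]; omega
    · intro i h1 h2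
      rw [List.getElem_take, List.getElem_ofFn,
        List.getD_eq_getElem _ _ (by simp at h1; omega)]
  have hofn : Q = List.ofFn (Fin.repeat t (fun i : Fin d => Q.getD i default)) := by
    apply List.ext_getElem
    · simp [htd]; omega
    · intro i h1 h2
      rw [List.getElem_ofFn, Fin.repeat_apply]
      simp only [Fin.modNat]
      rw [← List.getD_eq_getElem _ _ h1, hper i h1]
  rw [htake, ← List.ofFn_fin_repeat, ← hofn]

lemma rotate_cancel_aux [Inhabited α] {Q : List α} (hQ : Primitive Q) {a b : ℕ}
    (hab : a ≤ b) (hb : b < Q.length) (h : Q.rotate a = Q.rotate b) : a = b := by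
  by_contra hne
  have hlt : a < b := lt_of_le_of_ne hab hne
  have hn0 : 0 < Q.length := List.length_pos_iff.2 hQ.1
  set n := Q.length with hn
  set m := a + (n - b) with hm
  have h1 : Q.rotate m = Q := by
    have h2 := congrArg (fun l : List α => l.rotate (n - b)) h
    simp only [List.rotate_rotate] at h2
    have h3 : b + (n - b) = n := by omega
    rw [h3] at h2
    rw [hm, h2, hn, List.rotate_length]
  have hm0 : 0 < m := by omega
  have hmlt : m < n := by omega
  have hpm : Function.IsPeriodicPt (fun l : List α => l.rotate 1) m Q := by
    show (fun l : List α => l.rotate 1)^[m] Q = Q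
    rw [rotate_one_iterate]; exact h1
  have hpn : Function.IsPeriodicPt (fun l : List α => l.rotate 1) n Q := by
    show (fun l : List α => l.rotate 1)^[n] Q = Q
    rw [rotate_one_iterate, hn, List.rotate_length]
  have hpd := hpm.gcd hpn
  set d := Nat.gcd m n with hd
  have hd0 : 0 < d := Nat.gcd_pos_of_pos_left _ hm0
  have hddvd : d ∣ n := Nat.gcd_dvd_right m n
  have hdlt : d < n := lt_of_le_of_lt (Nat.le_of_dvd hm0 (Nat.gcd_dvd_left m n)) hmlt
  have hrotd : Q.rotate d = Q := by
    rw [← rotate_one_iterate]; exact hpd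
  have hpow := pow_of_rotate Q d hd0 hddvd hn0 hrotd
  have htd : (n / d) * d = n := Nat.div_mul_cancel hddvd
  have ht2 : 2 ≤ n / d := by
    rcases Nat.lt_or_ge (n / d) 2 with hc | hc
    · interval_cases h : (n / d) <;> omega
    · exact hc
  exact hQ.2 (Q.take d) (n / d) ht2 hpow

lemma majority_count [DecidableEq α] [Inhabited α]
    (S R : List α) (k n : ℕ) (hlen : R.length = n) (hn0 : 0 < n)
    (hS : (2 * k + 1) * n ≤ S.length)
    (h : hammingStar S R ≤ k) :
    k + 1 ≤ ((Finset.range (2 * k + 1)).filter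
        (fun i => frag S (i * n) ((i + 1) * n) = R)).card := by
  classical
  set Mis := (Finset.range S.length).filter
      (fun i => S.getD i default ≠ R.getD (i % n) default) with hMisDef
  have hMisCard : Mis.card ≤ k := by
    refine le_trans (le_of_eq ?_) h
    unfold hammingStar hamming
    rw [hMisDef]
    refine congrArg Finset.card (Finset.filter_congr ?_)
    intro i hi
    rw [Finset.mem_range] at hi
    have hrep : (repPrefix R 0 S.length).getD i default = R.getD (i % n) default := by
      unfold repPrefix
      rw [List.getD_eq_getElem _ _ (by simpa using hi)]
      rw [List.getElem_map, List.getElem_range', hlen]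
      simp [List.getD]
    rw [hrep]
  have hfrag : ∀ i, (∀ π, π < n → (i * n + π) ∉ Mis) →
      i * n + n ≤ S.length → frag S (i * n) ((i + 1) * n) = R := by
    intro i hgood hbound
    have hsub : (i + 1) * n - i * n = n := by ring_nf; omega
    apply List.ext_getElem
    · simp only [frag, List.length_take, List.length_drop, hsub, hlen]
      omega
    · intro π h1 h2
      have h1' : π < n ∧ π < S.length - i * n := by
        simpa only [frag, List.length_take, List.length_drop, hsub, lt_min_iff] using h1
      have hπ : π < n := h1'.1
      have hlt : i * n + π < S.length := by omega
      simp only [frag, hsub]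
      rw [List.getElem_take, List.getElem_drop]
      have hnm : i * n + π ∉ Mis := hgood π hπ
      simp only [hMisDef, Finset.mem_filter, Finset.mem_range, not_and, not_not] at hnm
      have heq := hnm hlt
      have hmod : (i * n + π) % n = π := by
        rw [Nat.add_comm, Nat.add_mul_mod_self_right, Nat.mod_eq_of_lt hπ]
      rw [hmod] at heq
      rw [List.getD_eq_getElem _ _ hlt, List.getD_eq_getElem _ _ (by omega : π < R.length)] at heq
      exact heq
  set F := (Finset.range (2 * k + 1)).filter
      (fun i => frag S (i * n) ((i + 1) * n) = R) with hF
  set B := (Finset.range (2 * k + 1)).filter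
      (fun i => ¬ frag S (i * n) ((i + 1) * n) = R) with hB
  have hFB : F.card + B.card = 2 * k + 1 := by
    rw [hF, hB, Finset.card_filter_add_card_filter_not, Finset.card_range]
  have hBcard : B.card ≤ Mis.card := by
    have hg : ∀ i ∈ B, 1 ≤ (Mis.filter (fun m => i * n ≤ m ∧ m < (i + 1) * n)).card := by
      intro i hi
      rw [hB, Finset.mem_filter, Finset.mem_range] at hi
      have hbound : i * n + n ≤ S.length := by
        calc i * n + n = (i + 1) * n := by ring
        _ ≤ (2 * k + 1) * n := Nat.mul_le_mul_right n (by omega)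
        _ ≤ S.length := hS
      have : ¬ (∀ π, π < n → (i * n + π) ∉ Mis) := fun hc => hi.2 (hfrag i hc hbound)
      push_neg at this
      obtain ⟨π, hπ, hmem⟩ := this
      exact Finset.card_pos.2
        ⟨i * n + π, Finset.mem_filter.2 ⟨hmem, Nat.le_add_right _ _, by nlinarith⟩⟩
    calc B.card = ∑ _i ∈ B, 1 := by simp
    _ ≤ ∑ i ∈ B, (Mis.filter (fun m => i * n ≤ m ∧ m < (i + 1) * n)).card :=
        Finset.sum_le_sum hg
    _ = (B.biUnion (fun i => Mis.filter (fun m => i * n ≤ m ∧ m < (i + 1) * n))).card := by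
        rw [Finset.card_biUnion]
        intro x _ y _ hxy
        simp only [Function.onFun, Finset.disjoint_left]
        intro m hm hm'
        rw [Finset.mem_filter] at hm hm'
        exact hxy (by
          have hx : m / n = x := Nat.div_eq_of_lt_le hm.2.1 hm.2.2
          have hy : m / n = y := Nat.div_eq_of_lt_le hm'.2.1 hm'.2.2
          omega)
    _ ≤ Mis.card := Finset.card_le_card (by
        intro m hm
        rw [Finset.mem_biUnion] at hm
        obtain ⟨i, _, hmem⟩ := hm
        exact (Finset.mem_filter.1 hmem).1)
  omega

end Aux

/-- a rotation of Q at Hamming distance ≤ k from S (of length ≥ (2k+1)|Q|)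
is the strict majority among 2k+1 consecutive length-|Q| fragments, and is unique. -/
theorem rotation_majority {α : Type*} [DecidableEq α] [Inhabited α]
    (S Q : List α) (k j : ℕ) (hk : 1 ≤ k) (hQ : Primitive Q)
    (hS : (2 * k + 1) * Q.length ≤ S.length) (hj : j < Q.length)
    (h : hammingStar S (rotR Q j) ≤ k) :
    k + 1 ≤ ((Finset.range (2 * k + 1)).filter
        (fun i => frag S (i * Q.length) ((i + 1) * Q.length) = rotR Q j)).card ∧
    (∀ j', j' < Q.length → hammingStar S (rotR Q j') ≤ k → j' = j) := by
  have hn0 : 0 < Q.length := List.length_pos_iff.2 hQ.1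
  have maj : ∀ j', hammingStar S (rotR Q j') ≤ k →
      k + 1 ≤ ((Finset.range (2 * k + 1)).filter
        (fun i => frag S (i * Q.length) ((i + 1) * Q.length) = rotR Q j')).card := by
    intro j' h'
    exact majority_count S (rotR Q j') k Q.length (by simp [rotR]) hn0 hS h'
  refine ⟨maj j h, ?_⟩
  intro j' hj' h'
  set F := (Finset.range (2 * k + 1)).filter
      (fun i => frag S (i * Q.length) ((i + 1) * Q.length) = rotR Q j) with hFdef
  set F' := (Finset.range (2 * k + 1)).filter
      (fun i => frag S (i * Q.length) ((i + 1) * Q.length) = rotR Q j') with hF'def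
  have h1 : k + 1 ≤ F.card := maj j h
  have h2 : k + 1 ≤ F'.card := maj j' h'
  have hinter : (F ∩ F').Nonempty := by
    by_contra hcon
    rw [Finset.not_nonempty_iff_eq_empty] at hcon
    have hu := Finset.card_union_add_card_inter F F'
    have hsub : (F ∪ F').card ≤ 2 * k + 1 := by
      have hss : F ∪ F' ⊆ Finset.range (2 * k + 1) :=
        Finset.union_subset (Finset.filter_subset _ _) (Finset.filter_subset _ _)
      simpa using Finset.card_le_card hss
    rw [hcon] at hu
    simp at hu
    omega
  obtain ⟨i, hi⟩ := hinter
  rw [Finset.mem_inter, hFdef, hF'def, Finset.mem_filter, Finset.mem_filter] at hi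
  have heq : rotR Q j = rotR Q j' := by rw [← hi.1.2, hi.2.2]
  unfold rotR at heq
  rw [Nat.mod_eq_of_lt hj, Nat.mod_eq_of_lt hj'] at heq
  set n := Q.length with hn
  have heq2 : Q.rotate ((n - j) % n) = Q.rotate ((n - j') % n) := by
    rw [List.rotate_mod, List.rotate_mod, heq]
  have ha : (n - j) % n < n := Nat.mod_lt _ hn0
  have hb : (n - j') % n < n := Nat.mod_lt _ hn0
  have hcancel : (n - j) % n = (n - j') % n := by
    rcases le_total ((n - j) % n) ((n - j') % n) with hle | hle
    · exact rotate_cancel_aux hQ hle hb heq2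
    · exact (rotate_cancel_aux hQ hle ha heq2.symm).symm
  have e1 : (n - j) % n = if j = 0 then 0 else n - j := by
    split
    · simp [*]
    · exact Nat.mod_eq_of_lt (by omega)
  have e2 : (n - j') % n = if j' = 0 then 0 else n - j' := by
    split
    · simp [*]
    · exact Nat.mod_eq_of_lt (by omega)
  rw [e1, e2] at hcancel
  split at hcancel <;> split at hcancel <;> omega
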